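/- arXiv:math/0005223 — 5 statements merged into one kernel-verified Lean document; each statement's English description precedes it below -/
import Mathlib

section
/- Let U : ℂ → ℝ be a real-valued function, let γ ∈ ℂ and μ ∈ ℂ. Suppose ψ = (ψ₁, ψ₂) : ℂ → ℂ² is continuously real-differentiable, satisfies the Dirac equation ∂ψ₂ + U·ψ₁ = 0 and −∂̄ψ₁ + U·ψ₂ = 0 on all of ℂ, and satisfies the Floquet condition ψ(z + γ) = μ·ψ(z) for all z ∈ ℂ. Then the pair φ = (φ₁, φ₂) with φ₁(z) = conj(ψ₂(z)) and φ₂(z) = −conj(ψ₁(z)) also satisfies the Dirac equation with the same potential U and satisfies φ(z + γ) = conj(μ)·φ(z) for all z ∈ ℂ. -/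
open Complex

/-- Wirtinger derivative ∂f = ½(∂f/∂x − i ∂f/∂y). -/
noncomputable def wd (f : ℂ → ℂ) (z : ℂ) : ℂ :=
  (1 / 2 : ℂ) * (fderiv ℝ f z 1 - Complex.I * fderiv ℝ f z Complex.I)

/-- Wirtinger derivative ∂̄f = ½(∂f/∂x + i ∂f/∂y). -/
noncomputable def wdb (f : ℂ → ℂ) (z : ℂ) : ℂ :=
  (1 / 2 : ℂ) * (fderiv ℝ f z 1 + Complex.I * fderiv ℝ f z Complex.I)

lemma fderiv_conj_comp (f : ℂ → ℂ) (hf : DifferentiableAt ℝ f z) (v : ℂ) :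
    fderiv ℝ (fun w => (starRingEnd ℂ) (f w)) z v = (starRingEnd ℂ) (fderiv ℝ f z v) := by
  have : fderiv ℝ (fun w => Complex.conjCLE (f w)) z
      = (Complex.conjCLE : ℂ →L[ℝ] ℂ).comp (fderiv ℝ f z) :=
    (Complex.conjCLE.toContinuousLinearMap.hasFDerivAt.comp z hf.hasFDerivAt).fderiv
  simpa using congrArg (fun L => L v) this

lemma wd_conj (f : ℂ → ℂ) (hf : DifferentiableAt ℝ f z) :
    wd (fun w => (starRingEnd ℂ) (f w)) z = (starRingEnd ℂ) (wdb f z) := by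
  simp [wd, wdb, fderiv_conj_comp f hf, map_mul, map_add, map_div₀, map_ofNat]
  ring

lemma wdb_conj (f : ℂ → ℂ) (hf : DifferentiableAt ℝ f z) :
    wdb (fun w => (starRingEnd ℂ) (f w)) z = (starRingEnd ℂ) (wd f z) := by
  simp [wd, wdb, fderiv_conj_comp f hf, map_mul, map_add, map_div₀, map_ofNat]

lemma wd_neg (f : ℂ → ℂ) (hf : DifferentiableAt ℝ f z) :
    wd (fun w => -(f w)) z = -wd f z := by
  simp [wd, fderiv_neg]
  ring

/-- The antiholomorphic involution of the Floquet spectrum of a Dirac operator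
with real-valued potential: if ψ = (ψ₁, ψ₂) solves 𝒟ψ = 0 with Floquet
multiplier μ for the period γ, then φ = (conj ψ₂, −conj ψ₁) solves 𝒟φ = 0 with
multiplier conj μ. -/
theorem stmt0 (U : ℂ → ℝ) (γ μ : ℂ) (ψ₁ ψ₂ : ℂ → ℂ)
    (hψ₁ : ContDiff ℝ 1 ψ₁) (hψ₂ : ContDiff ℝ 1 ψ₂)
    (hd1 : ∀ z, wd ψ₂ z + (U z : ℂ) * ψ₁ z = 0)
    (hd2 : ∀ z, -wdb ψ₁ z + (U z : ℂ) * ψ₂ z = 0)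
    (hf1 : ∀ z, ψ₁ (z + γ) = μ * ψ₁ z)
    (hf2 : ∀ z, ψ₂ (z + γ) = μ * ψ₂ z) :
    (∀ z, wd (fun w => -(starRingEnd ℂ) (ψ₁ w)) z
        + (U z : ℂ) * (starRingEnd ℂ) (ψ₂ z) = 0) ∧
    (∀ z, -wdb (fun w => (starRingEnd ℂ) (ψ₂ w)) z
        + (U z : ℂ) * (-(starRingEnd ℂ) (ψ₁ z)) = 0) ∧
    (∀ z, (starRingEnd ℂ) (ψ₂ (z + γ)) = (starRingEnd ℂ) μ * (starRingEnd ℂ) (ψ₂ z)) ∧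
    (∀ z, -(starRingEnd ℂ) (ψ₁ (z + γ)) = (starRingEnd ℂ) μ * (-(starRingEnd ℂ) (ψ₁ z))) := by
  have hψ₁' : Differentiable ℝ ψ₁ := hψ₁.differentiable one_ne_zero
  have hψ₂' : Differentiable ℝ ψ₂ := hψ₂.differentiable one_ne_zero
  refine ⟨fun z => ?_, fun z => ?_, fun z => ?_, fun z => ?_⟩
  · have h1 : DifferentiableAt ℝ (fun w => (starRingEnd ℂ) (ψ₁ w)) z :=
      Complex.conjCLE.differentiable.differentiableAt.comp z (hψ₁' z)
    rw [wd_neg _ h1, wd_conj ψ₁ (hψ₁' z)]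
    have := congrArg (starRingEnd ℂ) (hd2 z)
    simp only [map_add, map_neg, map_mul, Complex.conj_ofReal, map_zero] at this
    linear_combination this
  · rw [wdb_conj ψ₂ (hψ₂' z)]
    have := congrArg (starRingEnd ℂ) (hd1 z)
    simp only [map_add, map_mul, Complex.conj_ofReal, map_zero] at this
    linear_combination -this
  · rw [hf2 z, map_mul]
  · rw [hf1 z, map_mul]; ring
end

section
/- Let U : ℝ → ℂ be continuously differentiable, let λ ∈ ℂ, and let η₁, η₂ : ℝ → ℂ be twice continuously differentiable functions satisfying η₁′ + 2iU·η₁ = −iλ·η₂ and η₂′ − 2iU·η₂ = −iλ·η₁ on ℝ. Then f = η₂ satisfies the Schrödinger equation −f″ + (2iU′ − 4U²)·f = λ²·f on ℝ. -/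
/-- The Miura transformation: if η₁, η₂ solve the first-order system
η₁′ + 2iU·η₁ = −iλ·η₂, η₂′ − 2iU·η₂ = −iλ·η₁ coming from the Zakharov–Shabat
system, then f = η₂ solves the Schrödinger equation
−f″ + (2iU′ − 4U²)f = λ²f. -/
theorem stmt4 (U : ℝ → ℂ) (hU : ContDiff ℝ 1 U) (lam : ℂ)
    (η₁ η₂ : ℝ → ℂ) (h1 : ContDiff ℝ 2 η₁) (h2 : ContDiff ℝ 2 η₂)
    (e1 : ∀ x, deriv η₁ x + 2 * Complex.I * U x * η₁ x = -Complex.I * lam * η₂ x)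
    (e2 : ∀ x, deriv η₂ x - 2 * Complex.I * U x * η₂ x = -Complex.I * lam * η₁ x) :
    ∀ x, -deriv (deriv η₂) x + (2 * Complex.I * deriv U x - 4 * U x ^ 2) * η₂ x
      = lam ^ 2 * η₂ x := by
  intro x
  have dU : ∀ y, DifferentiableAt ℝ U y := fun y =>
    (hU.differentiable one_ne_zero).differentiableAt
  have d1 : ∀ y, DifferentiableAt ℝ η₁ y := fun y =>
    (h1.differentiable two_ne_zero).differentiableAt
  have d2 : ∀ y, DifferentiableAt ℝ η₂ y := fun y =>
    (h2.differentiable two_ne_zero).differentiableAt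
  have hfun : deriv η₂ = fun y => 2 * Complex.I * U y * η₂ y - Complex.I * lam * η₁ y := by
    funext y
    have := e2 y
    linear_combination this
  have hD : deriv (deriv η₂) x
      = deriv (fun y => 2 * Complex.I * U y * η₂ y - Complex.I * lam * η₁ y) x := by
    rw [hfun]
  rw [hD]
  rw [deriv_fun_sub (by
      exact ((differentiableAt_const _).mul (dU x)).mul (d2 x))
    ((differentiableAt_const _).fun_mul (d1 x))]
  rw [deriv_const_mul _ (d1 x)]
  rw [deriv_fun_mul ((differentiableAt_const _).fun_mul (dU x)) (d2 x)]
  rw [deriv_const_mul _ (dU x)]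
  have E1 : deriv η₁ x = -Complex.I * lam * η₂ x - 2 * Complex.I * U x * η₁ x := by
    linear_combination e1 x
  have E2 : deriv η₂ x = 2 * Complex.I * U x * η₂ x - Complex.I * lam * η₁ x := by
    linear_combination e2 x
  rw [E1, E2]
  ring_nf
  simp [Complex.I_sq]
end

section
/- Let α : ℂ → ℝ be continuously real-differentiable, set u = 2α, and let λ ∈ ℂ with λ ≠ 0. Let φ = (φ₁, φ₂) : ℂ → ℂ² be continuously real-differentiable. Then φ satisfies the system ∂φ₁ = ½(−∂u·φ₁ − λ·φ₂), ∂φ₂ = ½(−λ·φ₁ + ∂u·φ₂), ∂̄φ₁ = (1/(2λ))·e^{−u}·φ₂, ∂̄φ₂ = (1/(2λ))·e^{u}·φ₁ if and only if ψ = (ψ₁, ψ₂) with ψ₁ = λ·φ₂ and ψ₂ = e^{α}·φ₁ satisfies the system ∂ψ₁ = ∂α·ψ₁ − (λ²/2)·e^{−α}·ψ₂, ∂ψ₂ = −½·e^{α}·ψ₁, ∂̄ψ₁ = ½·e^{α}·ψ₂, ∂̄ψ₂ = (1/(2λ²))·e^{−α}·ψ₁ + ∂̄α·ψ₂. -/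
open Complex

lemma wd_const_mul (c : ℂ) (f : ℂ → ℂ) (z : ℂ) (hf : DifferentiableAt ℝ f z) :
    wd (fun w => c * f w) z = c * wd f z := by
  simp [wd, fderiv_const_mul hf c]; ring

lemma wdb_const_mul (c : ℂ) (f : ℂ → ℂ) (z : ℂ) (hf : DifferentiableAt ℝ f z) :
    wdb (fun w => c * f w) z = c * wdb f z := by
  simp [wdb, fderiv_const_mul hf c]; ring

lemma wd_mul (f g : ℂ → ℂ) (z : ℂ) (hf : DifferentiableAt ℝ f z)
    (hg : DifferentiableAt ℝ g z) :
    wd (fun w => f w * g w) z = wd f z * g z + f z * wd g z := by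
  simp [wd, fderiv_fun_mul hf hg, smul_eq_mul]; ring

lemma wdb_mul (f g : ℂ → ℂ) (z : ℂ) (hf : DifferentiableAt ℝ f z)
    (hg : DifferentiableAt ℝ g z) :
    wdb (fun w => f w * g w) z = wdb f z * g z + f z * wdb g z := by
  simp [wdb, fderiv_fun_mul hf hg, smul_eq_mul]; ring

lemma exp_fderiv (g : ℂ → ℂ) (z : ℂ) (hg : DifferentiableAt ℝ g z) (v : ℂ) :
    fderiv ℝ (fun w => Complex.exp (g w)) z v = Complex.exp (g z) * fderiv ℝ g z v := by
  have h := ((Complex.hasDerivAt_exp (g z)).hasFDerivAt.restrictScalars ℝ).comp z hg.hasFDerivAt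
  rw [show (fun w => Complex.exp (g w)) = cexp ∘ g from rfl, h.fderiv]
  simp [mul_comm]

lemma wd_exp (g : ℂ → ℂ) (z : ℂ) (hg : DifferentiableAt ℝ g z) :
    wd (fun w => Complex.exp (g w)) z = Complex.exp (g z) * wd g z := by
  simp [wd, exp_fderiv g z hg]; ring

lemma wdb_exp (g : ℂ → ℂ) (z : ℂ) (hg : DifferentiableAt ℝ g z) :
    wdb (fun w => Complex.exp (g w)) z = Complex.exp (g z) * wdb g z := by
  simp [wdb, exp_fderiv g z hg]; ring


/-- Gauge equivalence between the sinh-Gordon zero-curvature linear problem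
(with u = 2α and spectral parameter λ ≠ 0) and the Gauss–Weingarten system of a
CMC surface, under ψ₁ = λφ₂, ψ₂ = e^α φ₁ (Proposition 6 of the paper). -/
theorem stmt10 (α : ℂ → ℝ) (hα : ContDiff ℝ 1 α) (lam : ℂ) (hlam : lam ≠ 0)
    (φ₁ φ₂ : ℂ → ℂ) (h1 : ContDiff ℝ 1 φ₁) (h2 : ContDiff ℝ 1 φ₂) :
    ((∀ z, wd φ₁ z = (1 / 2) *
        (-(wd (fun w => ((2 * α w : ℝ) : ℂ)) z) * φ₁ z - lam * φ₂ z)) ∧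
     (∀ z, wd φ₂ z = (1 / 2) *
        (-lam * φ₁ z + wd (fun w => ((2 * α w : ℝ) : ℂ)) z * φ₂ z)) ∧
     (∀ z, wdb φ₁ z = (1 / (2 * lam)) * Complex.exp (-((2 * α z : ℝ) : ℂ)) * φ₂ z) ∧
     (∀ z, wdb φ₂ z = (1 / (2 * lam)) * Complex.exp ((2 * α z : ℝ) : ℂ) * φ₁ z))
    ↔
    ((∀ z, wd (fun w => lam * φ₂ w) z
        = wd (fun w => ((α w : ℝ) : ℂ)) z * (lam * φ₂ z)
          - (lam ^ 2 / 2) * Complex.exp (-((α z : ℝ) : ℂ)) *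
            (Complex.exp ((α z : ℝ) : ℂ) * φ₁ z)) ∧
     (∀ z, wd (fun w => Complex.exp ((α w : ℝ) : ℂ) * φ₁ w) z
        = -(1 / 2) * Complex.exp ((α z : ℝ) : ℂ) * (lam * φ₂ z)) ∧
     (∀ z, wdb (fun w => lam * φ₂ w) z
        = (1 / 2) * Complex.exp ((α z : ℝ) : ℂ) * (Complex.exp ((α z : ℝ) : ℂ) * φ₁ z)) ∧
     (∀ z, wdb (fun w => Complex.exp ((α w : ℝ) : ℂ) * φ₁ w) z
        = (1 / (2 * lam ^ 2)) * Complex.exp (-((α z : ℝ) : ℂ)) * (lam * φ₂ z)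
          + wdb (fun w => ((α w : ℝ) : ℂ)) z * (Complex.exp ((α z : ℝ) : ℂ) * φ₁ z))) := by
  have hd1 : Differentiable ℝ φ₁ := h1.differentiable one_ne_zero
  have hd2 : Differentiable ℝ φ₂ := h2.differentiable one_ne_zero
  have har : Differentiable ℝ (fun w => ((α w : ℝ) : ℂ)) :=
    fun z => Complex.ofRealCLM.differentiableAt.comp z ((hα.differentiable one_ne_zero) z)
  have hexp : Differentiable ℝ (fun w => Complex.exp ((α w : ℝ) : ℂ)) :=
    (Complex.differentiable_exp (𝕜 := ℝ)).comp har
  have key : ∀ z, wd (fun w => ((2 * α w : ℝ) : ℂ)) z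
      = 2 * wd (fun w => ((α w : ℝ) : ℂ)) z := by
    intro z
    have : (fun w => ((2 * α w : ℝ) : ℂ)) = fun w => (2 : ℂ) * ((α w : ℝ) : ℂ) := by
      funext w; push_cast; ring
    rw [this, wd_const_mul _ _ _ (har z)]
  have he2 : ∀ z, Complex.exp ((2 * α z : ℝ) : ℂ)
      = Complex.exp ((α z : ℝ) : ℂ) * Complex.exp ((α z : ℝ) : ℂ) := by
    intro z; rw [← Complex.exp_add]; push_cast; ring_nf
  have hen2 : ∀ z, Complex.exp (-((2 * α z : ℝ) : ℂ))
      = Complex.exp (-((α z : ℝ) : ℂ)) * Complex.exp (-((α z : ℝ) : ℂ)) := by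
    intro z; rw [← Complex.exp_add]; push_cast; ring_nf
  have hE : ∀ z, Complex.exp (-((α z : ℝ) : ℂ)) * Complex.exp ((α z : ℝ) : ℂ) = 1 := by
    intro z; rw [← Complex.exp_add]; simp
  have hli : lam * lam⁻¹ = 1 := mul_inv_cancel₀ hlam
  constructor
  · rintro ⟨ha, hb, hc, hd⟩
    refine ⟨fun z => ?_, fun z => ?_, fun z => ?_, fun z => ?_⟩
    · rw [wd_const_mul _ _ _ (hd2 z), hb z, key z]
      linear_combination (lam ^ 2 / 2 * φ₁ z) * hE z
    · rw [wd_mul _ _ _ (hexp z) (hd1 z), wd_exp _ _ (har z), ha z, key z]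
      ring
    · rw [wdb_const_mul _ _ _ (hd2 z), hd z, he2 z]
      field_simp
    · rw [wdb_mul _ _ _ (hexp z) (hd1 z), wdb_exp _ _ (har z), hc z, hen2 z]
      linear_combination (1/(2*lam)) * Complex.exp (-((α z : ℝ) : ℂ)) * φ₂ z * (hE z - hli)
  · rintro ⟨ka, kb, kc, kd⟩
    refine ⟨fun z => ?_, fun z => ?_, fun z => ?_, fun z => ?_⟩
    · have h := kb z
      rw [wd_mul _ _ _ (hexp z) (hd1 z), wd_exp _ _ (har z)] at h
      rw [key z]
      refine mul_left_cancel₀ (Complex.exp_ne_zero ((α z : ℝ) : ℂ)) ?_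
      linear_combination h
    · have h := ka z
      rw [wd_const_mul _ _ _ (hd2 z)] at h
      rw [key z]
      refine mul_left_cancel₀ hlam ?_
      linear_combination h - (lam ^ 2 / 2 * φ₁ z) * hE z
    · have h := kd z
      rw [wdb_mul _ _ _ (hexp z) (hd1 z), wdb_exp _ _ (har z)] at h
      rw [hen2 z]
      refine mul_left_cancel₀ (Complex.exp_ne_zero ((α z : ℝ) : ℂ)) ?_
      linear_combination h - (1/(2*lam)) * Complex.exp (-((α z : ℝ) : ℂ)) * φ₂ z * (hE z - hli)
    · have h := kc z
      rw [wdb_const_mul _ _ _ (hd2 z)] at h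
      rw [he2 z]
      refine mul_left_cancel₀ hlam ?_
      linear_combination h - (1/2) * Complex.exp ((α z : ℝ) : ℂ) ^ 2 * φ₁ z * hli
end

section
/- Let α, k₁, k₂ : ℂ → ℝ be continuously real-differentiable, let λ ∈ ℂ, and set p = (k₁ + k₂)·e^{α}/4 and q = (k₁ − k₂)·e^{α}/4. Suppose φ = (φ₁, φ₂, φ₃, φ₄) : ℂ → ℂ⁴ is continuously real-differentiable and satisfies the system: ∂φ₁ = ∂α·φ₁ + q·φ₂; ∂φ₂ = −p·φ₁ + λ·φ₃; ∂φ₃ = λ·φ₂ + 2∂α·φ₃ + q·φ₄; ∂φ₄ = −p·φ₃ + ∂α·φ₄; ∂̄φ₁ = p·φ₂ + λ·φ₄; ∂̄φ₂ = −q·φ₁ + ∂̄α·φ₂; ∂̄φ₃ = ∂̄α·φ₃ + p·φ₄; ∂̄φ₄ = λ·φ₁ − q·φ₃ + 2∂̄α·φ₄. Then: (1) ψ = (e^{−α}·φ₃, e^{−α}·φ₄) satisfies the Dirac equation with potential U = (k₁ + k₂)·e^{α}/4, i.e. ∂(e^{−α}φ₄) + U·e^{−α}φ₃ = 0 and −∂̄(e^{−α}φ₃)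 + U·e^{−α}φ₄ = 0; and (2) ψ* = (e^{−α}·φ₂, e^{−α}·φ₁) satisfies the Dirac equation with potential U* = (k₂ − k₁)·e^{α}/4, i.e. ∂(e^{−α}φ₁) + U*·e^{−α}φ₂ = 0 and −∂̄(e^{−α}φ₂) + U*·e^{−α}φ₁ = 0. -/
open Complex

lemma wd_exp_neg (A : ℂ → ℂ) (z : ℂ) (hA : DifferentiableAt ℝ A z) :
    wd (fun w => Complex.exp (-(A w))) z = -Complex.exp (-(A z)) * wd A z := by
  have h1 : HasFDerivAt (fun w => -(A w)) (-(fderiv ℝ A z)) z := hA.hasFDerivAt.neg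
  have h3 := ((Complex.hasDerivAt_exp (-(A z))).hasFDerivAt.restrictScalars ℝ).comp z h1
  simp only [Function.comp_def] at h3
  unfold wd
  rw [h3.fderiv]
  simp [smul_eq_mul]
  ring

lemma wdb_exp_neg (A : ℂ → ℂ) (z : ℂ) (hA : DifferentiableAt ℝ A z) :
    wdb (fun w => Complex.exp (-(A w))) z = -Complex.exp (-(A z)) * wdb A z := by
  have h1 : HasFDerivAt (fun w => -(A w)) (-(fderiv ℝ A z)) z := hA.hasFDerivAt.neg
  have h3 := ((Complex.hasDerivAt_exp (-(A z))).hasFDerivAt.restrictScalars ℝ).comp z h1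
  simp only [Function.comp_def] at h3
  unfold wdb
  rw [h3.fderiv]
  simp [smul_eq_mul]
  ring

/-- Proposition 7 of the paper: a Floquet solution φ of the 4×4 isothermic
linear problem with spectral parameter λ projects onto solutions of the Dirac
equations with the potentials U = (k₁ + k₂)e^α/4 of the surface and
U* = (k₂ − k₁)e^α/4 of its dual. -/
theorem stmt13 (α k₁ k₂ : ℂ → ℝ)
    (hα : ContDiff ℝ 1 α) (hk₁ : ContDiff ℝ 1 k₁) (hk₂ : ContDiff ℝ 1 k₂)
    (lam : ℂ) (φ₁ φ₂ φ₃ φ₄ : ℂ → ℂ)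
    (h1 : ContDiff ℝ 1 φ₁) (h2 : ContDiff ℝ 1 φ₂)
    (h3 : ContDiff ℝ 1 φ₃) (h4 : ContDiff ℝ 1 φ₄)
    (p q : ℂ → ℂ)
    (hp : ∀ z, p z = ((k₁ z + k₂ z : ℝ) : ℂ) * Complex.exp ((α z : ℝ) : ℂ) / 4)
    (hq : ∀ z, q z = ((k₁ z - k₂ z : ℝ) : ℂ) * Complex.exp ((α z : ℝ) : ℂ) / 4)
    (e1 : ∀ z, wd φ₁ z = wd (fun w => ((α w : ℝ) : ℂ)) z * φ₁ z + q z * φ₂ z)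
    (e2 : ∀ z, wd φ₂ z = -(p z) * φ₁ z + lam * φ₃ z)
    (e3 : ∀ z, wd φ₃ z = lam * φ₂ z
      + 2 * wd (fun w => ((α w : ℝ) : ℂ)) z * φ₃ z + q z * φ₄ z)
    (e4 : ∀ z, wd φ₄ z = -(p z) * φ₃ z + wd (fun w => ((α w : ℝ) : ℂ)) z * φ₄ z)
    (e5 : ∀ z, wdb φ₁ z = p z * φ₂ z + lam * φ₄ z)
    (e6 : ∀ z, wdb φ₂ z = -(q z) * φ₁ z + wdb (fun w => ((α w : ℝ) : ℂ)) z * φ₂ z)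
    (e7 : ∀ z, wdb φ₃ z = wdb (fun w => ((α w : ℝ) : ℂ)) z * φ₃ z + p z * φ₄ z)
    (e8 : ∀ z, wdb φ₄ z = lam * φ₁ z - q z * φ₃ z
      + 2 * wdb (fun w => ((α w : ℝ) : ℂ)) z * φ₄ z) :
    ((∀ z, wd (fun w => Complex.exp (-((α w : ℝ) : ℂ)) * φ₄ w) z
        + p z * (Complex.exp (-((α z : ℝ) : ℂ)) * φ₃ z) = 0) ∧
     (∀ z, -wdb (fun w => Complex.exp (-((α w : ℝ) : ℂ)) * φ₃ w) z
        + p z * (Complex.exp (-((α z : ℝ) : ℂ)) * φ₄ z) = 0)) ∧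
    ((∀ z, wd (fun w => Complex.exp (-((α w : ℝ) : ℂ)) * φ₁ w) z
        + (-(q z)) * (Complex.exp (-((α z : ℝ) : ℂ)) * φ₂ z) = 0) ∧
     (∀ z, -wdb (fun w => Complex.exp (-((α w : ℝ) : ℂ)) * φ₂ w) z
        + (-(q z)) * (Complex.exp (-((α z : ℝ) : ℂ)) * φ₁ z) = 0)) := by

  have hA : Differentiable ℝ (fun w => ((α w : ℝ) : ℂ)) :=
    Complex.ofRealCLM.differentiable.comp (hα.differentiable one_ne_zero)
  have hexp : Differentiable ℝ Complex.exp := fun w =>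
    ((Complex.hasDerivAt_exp w).hasFDerivAt.restrictScalars ℝ).differentiableAt
  have hE : Differentiable ℝ (fun w => Complex.exp (-((α w : ℝ) : ℂ))) :=
    hexp.comp hA.neg
  refine ⟨⟨fun z => ?_, fun z => ?_⟩, fun z => ?_, fun z => ?_⟩
  · rw [wd_mul _ _ z (hE z) ((h4.differentiable one_ne_zero) z), wd_exp_neg _ z (hA z), e4 z]; ring
  · rw [wdb_mul _ _ z (hE z) ((h3.differentiable one_ne_zero) z), wdb_exp_neg _ z (hA z), e7 z]; ring
  · rw [wd_mul _ _ z (hE z) ((h1.differentiable one_ne_zero) z), wd_exp_neg _ z (hA z), e1 z]; ring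
  · rw [wdb_mul _ _ z (hE z) ((h2.differentiable one_ne_zero) z), wdb_exp_neg _ z (hA z), e6 z]; ring
end

section
/- Let λ ∈ ℂ with λ ≠ 0, and define ψ = (ψ₁, ψ₂) : ℂ → ℂ² by ψ₁(z) = exp(λz − (1/(8λ))·conj(z)) and ψ₂(z) = (i/(2√2·λ))·exp(λz − (1/(8λ))·conj(z)). Then ψ satisfies the Dirac equation ∂ψ₂ + V·ψ₁ = 0 and −∂̄ψ₁ + conj(V)·ψ₂ = 0 with constant potential V = −i/(2√2), and its Floquet multipliers with respect to the lattice 2πℤ + 2πiℤ are ψ(z + 2π) = exp(2π(λ − 1/(8λ)))·ψ(z) and ψ(z + 2πi) = exp(2πi(λ + 1/(8λ)))·ψ(z) for all z ∈ ℂ. -/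
open Complex

noncomputable def Lc (lam c : ℂ) : ℂ →L[ℝ] ℂ :=
  lam • (ContinuousLinearMap.id ℝ ℂ) - c • (Complex.conjCLE : ℂ ≃L[ℝ] ℂ).toContinuousLinearMap

lemma Lc_apply (lam c v : ℂ) : Lc lam c v = lam * v - c * (starRingEnd ℂ) v := by
  simp [Lc, smul_eq_mul]

lemma hasF (lam c z : ℂ) :
    HasFDerivAt (fun w : ℂ => Complex.exp (lam * w - c * (starRingEnd ℂ) w))
      (Complex.exp (lam * z - c * (starRingEnd ℂ) z) • Lc lam c) z := by
  have hfun : (fun w : ℂ => lam * w - c * (starRingEnd ℂ) w) = ⇑(Lc lam c) := by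
    funext w; rw [Lc_apply]
  have h1 : HasFDerivAt (fun w : ℂ => lam * w - c * (starRingEnd ℂ) w) (Lc lam c) z := by
    rw [hfun]; exact (Lc lam c).hasFDerivAt
  have h2 := ((Complex.hasDerivAt_exp (lam * z - c * (starRingEnd ℂ) z)).hasFDerivAt.restrictScalars ℝ).comp z h1
  refine HasFDerivAt.congr_fderiv h2 ?_
  ext v
  simp [Lc_apply, smul_eq_mul]
  ring

lemma wd_aux (a lam c z : ℂ) :
    wd (fun w : ℂ => a * Complex.exp (lam * w - c * (starRingEnd ℂ) w)) z
      = a * lam * Complex.exp (lam * z - c * (starRingEnd ℂ) z) := by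
  have h := (hasF lam c z).const_mul a
  rw [wd, h.fderiv]
  simp [Lc_apply, smul_eq_mul, Complex.conj_I]
  ring_nf
  simp [Complex.I_sq]
  ring

lemma wdb_aux (a lam c z : ℂ) :
    wdb (fun w : ℂ => a * Complex.exp (lam * w - c * (starRingEnd ℂ) w)) z
      = -(a * c) * Complex.exp (lam * z - c * (starRingEnd ℂ) z) := by
  have h := (hasF lam c z).const_mul a
  rw [wdb, h.fderiv]
  simp [Lc_apply, smul_eq_mul, Complex.conj_I]
  ring_nf
  simp [Complex.I_sq]
  ring

/-- The Floquet functions of the Clifford torus: for λ ≠ 0,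
ψ₁(z) = e^{λz − z̄/(8λ)}, ψ₂(z) = (i/(2√2 λ))e^{λz − z̄/(8λ)} solve the Dirac
equation ∂ψ₂ + Vψ₁ = 0, −∂̄ψ₁ + V̄ψ₂ = 0 with V = −i/(2√2), and their Floquet
multipliers for the lattice 2πℤ + 2πiℤ are e^{2π(λ − 1/(8λ))} and
e^{2πi(λ + 1/(8λ))}. -/
theorem stmt19 (lam : ℂ) (hlam : lam ≠ 0) :
    let V : ℂ := -Complex.I / (2 * (Real.sqrt 2 : ℂ))
    let ψ₁ : ℂ → ℂ := fun z =>
      Complex.exp (lam * z - 1 / (8 * lam) * (starRingEnd ℂ) z)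
    let ψ₂ : ℂ → ℂ := fun z =>
      Complex.I / (2 * (Real.sqrt 2 : ℂ) * lam) *
        Complex.exp (lam * z - 1 / (8 * lam) * (starRingEnd ℂ) z)
    (∀ z, wd ψ₂ z + V * ψ₁ z = 0) ∧
    (∀ z, -wdb ψ₁ z + (starRingEnd ℂ) V * ψ₂ z = 0) ∧
    (∀ z, ψ₁ (z + 2 * Real.pi) =
      Complex.exp (2 * Real.pi * (lam - 1 / (8 * lam))) * ψ₁ z) ∧
    (∀ z, ψ₂ (z + 2 * Real.pi) =
      Complex.exp (2 * Real.pi * (lam - 1 / (8 * lam))) * ψ₂ z) ∧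
    (∀ z, ψ₁ (z + 2 * Real.pi * Complex.I) =
      Complex.exp (2 * Real.pi * Complex.I * (lam + 1 / (8 * lam))) * ψ₁ z) ∧
    (∀ z, ψ₂ (z + 2 * Real.pi * Complex.I) =
      Complex.exp (2 * Real.pi * Complex.I * (lam + 1 / (8 * lam))) * ψ₂ z) := by
  intro V ψ₁ ψ₂
  have hs : ((Real.sqrt 2 : ℝ) : ℂ) ≠ 0 := by
    norm_cast; positivity
  have hs2 : ((Real.sqrt 2 : ℝ) : ℂ) * ((Real.sqrt 2 : ℝ) : ℂ) = 2 := by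
    norm_cast; exact Real.mul_self_sqrt (by norm_num)
  have hψ₁ : ψ₁ = fun z => (1 : ℂ) * Complex.exp (lam * z - 1 / (8 * lam) * (starRingEnd ℂ) z) := by
    funext z; simp [ψ₁]
  refine ⟨?_, ?_, ?_, ?_, ?_, ?_⟩
  · intro z
    rw [show ψ₂ = fun z => (Complex.I / (2 * (Real.sqrt 2 : ℂ) * lam)) *
      Complex.exp (lam * z - 1 / (8 * lam) * (starRingEnd ℂ) z) from rfl,
      wd_aux]
    simp only [ψ₁, V]
    rw [← add_mul]
    convert zero_mul _
    field_simp
    ring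
  · intro z
    rw [hψ₁, wdb_aux]
    simp only [ψ₂, V]
    rw [map_div₀, map_neg, Complex.conj_I]
    have : (starRingEnd ℂ) (2 * (Real.sqrt 2 : ℂ)) = 2 * (Real.sqrt 2 : ℂ) := by
      simp [Complex.conj_ofReal, map_ofNat]
    have key : Complex.I / (2 * (Real.sqrt 2 : ℂ)) * (Complex.I / (2 * (Real.sqrt 2 : ℂ) * lam))
        = -(1 / (8 * lam)) := by
      rw [div_mul_div_comm, Complex.I_mul_I,
        show (2 * ((Real.sqrt 2 : ℝ) : ℂ)) * (2 * ((Real.sqrt 2 : ℝ) : ℂ) * lam) = 8 * lam from by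
          linear_combination (4 * lam) * hs2]
      ring
    rw [this]
    linear_combination Complex.exp (lam * z - 1 / (8 * lam) * (starRingEnd ℂ) z) * key
  · intro z
    simp only [ψ₁, ← Complex.exp_add]
    congr 1
    simp only [map_add, map_mul, Complex.conj_ofReal, map_ofNat]
    ring
  · intro z
    simp only [ψ₂]
    conv_rhs => rw [mul_left_comm, ← Complex.exp_add]
    congr 2
    simp only [map_add, map_mul, Complex.conj_ofReal, map_ofNat]
    ring
  · intro z
    simp only [ψ₁, ← Complex.exp_add]
    congr 1
    simp only [map_add, map_mul, Complex.conj_ofReal, map_ofNat, Complex.conj_I]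
    ring
  · intro z
    simp only [ψ₂]
    conv_rhs => rw [mul_left_comm, ← Complex.exp_add]
    congr 2
    simp only [map_add, map_mul, Complex.conj_ofReal, map_ofNat, Complex.conj_I]
    ring
end
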